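/- Let G = (V, E) be a finite simple graph and let 2 ≤ k < |V|. Define a metric δ on V by δ(u, v) = 1 if uv ∈ E, δ(u, v) = 2 if u ≠ v and uv ∉ E, and δ(u, u) = 0. Then G has an independent dominating set of cardinality k if and only if there exists a set P ⊆ V with |P| = k whose gap ratio in the metric space (V, δ) equals 1 (equivalently, R_P = r_P = 1). -/
import Mathlib


open Classical in
/-- The metric on the vertex set of `G` giving distance `1` to adjacent pairs and
`2` to distinct non-adjacent pairs. -/
noncomputable def dlt {V : Type*} (G : SimpleGraph V) (u v : V) : ℝ :=
  if u = v then 0 else if G.Adj u v then 1 else 2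

/-- Minimum gap of `P` with respect to a distance function `δ`. -/
noncomputable def minGapD {V : Type*} (δ : V → V → ℝ) (P : Set V) : ℝ :=
  sInf {d : ℝ | ∃ p ∈ P, ∃ q ∈ P, p ≠ q ∧ d = δ p q} / 2

/-- Maximum gap of `P` over the space `X` with respect to a distance function `δ`. -/
noncomputable def maxGapD {V : Type*} (δ : V → V → ℝ) (X P : Set V) : ℝ :=
  sSup ((fun x => sInf {d : ℝ | ∃ p ∈ P, d = δ x p}) '' X)

/-- `D` is an independent dominating set of `G`. -/
def IsIndepDominating {V : Type*} (G : SimpleGraph V) (D : Set V) : Prop :=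
  (∀ u ∈ D, ∀ v ∈ D, u ≠ v → ¬ G.Adj u v) ∧ (∀ v : V, v ∈ D ∨ ∃ u ∈ D, G.Adj v u)

lemma dlt_mem {V : Type*} (G : SimpleGraph V) (u v : V) :
    dlt G u v ∈ ({0, 1, 2} : Set ℝ) := by
  unfold dlt; split_ifs <;> simp

lemma dlt_eq_two {V : Type*} (G : SimpleGraph V) {u v : V} (h : u ≠ v)
    (h2 : ¬ G.Adj u v) : dlt G u v = 2 := by
  unfold dlt; rw [if_neg h, if_neg h2]

lemma fin012 : ({0, 1, 2} : Set ℝ).Finite := (Set.finite_singleton _).insert _ |>.insert _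

/-- `G` has an independent dominating set of cardinality `k` iff there is a
`k`-point set `P` of vertices with gap ratio `1` (i.e. `R_P = r_P = 1`) in the
metric assigning `1` to edges and `2` to non-edges. -/
theorem stmt5 {V : Type*} [Fintype V] (G : SimpleGraph V) (k : ℕ)
    (hk2 : 2 ≤ k) (hkV : k < Fintype.card V) :
    (∃ D : Set V, D.ncard = k ∧ IsIndepDominating G D) ↔
    (∃ P : Set V, P.ncard = k ∧
      maxGapD (dlt G) Set.univ P = 1 ∧ minGapD (dlt G) P = 1) := by
  have Tfin : ∀ (P : Set V) (x : V), ({d : ℝ | ∃ p ∈ P, d = dlt G x p}).Finite := by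
    intro P x
    refine fin012.subset ?_
    rintro d ⟨p, hp, rfl⟩
    exact dlt_mem G x p
  have Sfin : ∀ (P : Set V),
      ({d : ℝ | ∃ p ∈ P, ∃ q ∈ P, p ≠ q ∧ d = dlt G p q}).Finite := by
    intro P
    refine fin012.subset ?_
    rintro d ⟨p, hp, q, hq, hne, rfl⟩
    exact dlt_mem G p q
  constructor
  · rintro ⟨D, hcard, hind, hdom⟩
    refine ⟨D, hcard, ?_, ?_⟩
    · -- maxGap = 1
      -- exists x ∉ D
      obtain ⟨x, hx⟩ : ∃ x, x ∉ D := by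
        by_contra h
        push_neg at h
        have : D = Set.univ := Set.eq_univ_of_forall h
        rw [this, Set.ncard_univ, Nat.card_eq_fintype_card] at hcard
        omega
      have hub : ∀ y : V, sInf {d : ℝ | ∃ p ∈ D, d = dlt G y p} ≤ 1 := by
        intro y
        rcases hdom y with hy | ⟨u, hu, hadj⟩
        · have h0 : (0 : ℝ) ∈ {d : ℝ | ∃ p ∈ D, d = dlt G y p} := by
            refine ⟨y, hy, ?_⟩
            unfold dlt; rw [if_pos rfl]
          have := csInf_le (Tfin D y).bddBelow h0
          linarith
        · have h1 : (1 : ℝ) ∈ {d : ℝ | ∃ p ∈ D, d = dlt G y p} := by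
            refine ⟨u, hu, ?_⟩
            unfold dlt; rw [if_neg hadj.ne, if_pos hadj]
          exact csInf_le (Tfin D y).bddBelow h1
      have hgx : sInf {d : ℝ | ∃ p ∈ D, d = dlt G x p} = 1 := by
        rcases hdom x with hx' | ⟨u, hu, hadj⟩
        · exact absurd hx' hx
        · refine le_antisymm (hub x) ?_
          refine le_csInf ⟨dlt G x u, u, hu, rfl⟩ ?_
          rintro d ⟨p, hp, rfl⟩
          have hne : x ≠ p := fun h => hx (h ▸ hp)
          unfold dlt
          rw [if_neg hne]
          split_ifs <;> norm_num
      unfold maxGapD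
      apply IsGreatest.csSup_eq
      constructor
      · exact ⟨x, Set.mem_univ x, hgx⟩
      · rintro d ⟨y, -, rfl⟩
        exact hub y
    · -- minGap = 1
      unfold minGapD
      have hS : sInf {d : ℝ | ∃ p ∈ D, ∃ q ∈ D, p ≠ q ∧ d = dlt G p q} = 2 := by
        apply IsLeast.csInf_eq
        constructor
        · obtain ⟨p, hp, q, hq, hne⟩ : ∃ p ∈ D, ∃ q ∈ D, p ≠ q :=
            (Set.one_lt_ncard (Set.toFinite D)).mp (by omega)
          exact ⟨p, hp, q, hq, hne, (dlt_eq_two G hne (hind p hp q hq hne)).symm⟩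
        · rintro d ⟨p, hp, q, hq, hne, rfl⟩
          rw [dlt_eq_two G hne (hind p hp q hq hne)]
      rw [hS]; norm_num
  · rintro ⟨P, hcard, hmax, hmin⟩
    have hPne : P.Nonempty := by
      apply Set.nonempty_of_ncard_ne_zero
      omega
    unfold minGapD at hmin
    have hS : sInf {d : ℝ | ∃ p ∈ P, ∃ q ∈ P, p ≠ q ∧ d = dlt G p q} = 2 := by
      linarith
    refine ⟨P, hcard, ?_, ?_⟩
    · intro u hu v hv hne hadj
      have h1 : (1 : ℝ) ∈ {d : ℝ | ∃ p ∈ P, ∃ q ∈ P, p ≠ q ∧ d = dlt G p q} := by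
        refine ⟨u, hu, v, hv, hne, ?_⟩
        unfold dlt; rw [if_neg hne, if_pos hadj]
      have := csInf_le (Sfin P).bddBelow h1
      rw [hS] at this
      linarith
    · intro v
      by_contra h
      push_neg at h
      obtain ⟨hvP, hnadj⟩ := h
      have hgv : sInf {d : ℝ | ∃ p ∈ P, d = dlt G v p} = 2 := by
        apply IsLeast.csInf_eq
        constructor
        · obtain ⟨p, hp⟩ := hPne
          have hne : v ≠ p := fun hh => hvP (hh ▸ hp)
          exact ⟨p, hp, (dlt_eq_two G hne (hnadj p hp)).symm⟩
        · rintro d ⟨p, hp, rfl⟩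
          have hne : v ≠ p := fun hh => hvP (hh ▸ hp)
          rw [dlt_eq_two G hne (hnadj p hp)]
      have hle : sInf {d : ℝ | ∃ p ∈ P, d = dlt G v p} ≤
          maxGapD (dlt G) Set.univ P := by
        unfold maxGapD
        apply le_csSup
        · exact ((Set.finite_univ.image _)).bddAbove
        · exact ⟨v, Set.mem_univ v, rfl⟩
      rw [hgv, hmax] at hle
      linarith
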